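/- For any integers d ≥ 2 and α ≥ 2, the wreath product ℤ/dℤ ≀ S_α (the semidirect product (ℤ/dℤ)^α ⋊ S_α with S_α permuting coordinates) can be generated by 2 elements, and cannot be generated by fewer than 2 elements. -/

import Mathlib

/-- The action of `Equiv.Perm (Fin α)` on `Fin α → C` by permuting coordinates. -/
def wreathAut (C : Type*) [Group C] (α : ℕ) : Equiv.Perm (Fin α) →* MulAut (Fin α → C) where
  toFun σ := MulEquiv.arrowCongr σ (MulEquiv.refl C)
  map_one' := by ext; rfl
  map_mul' := by intros; ext; rfl

/-- The wreath product `C ≀ S_α` as the semidirect product `C^α ⋊ S_α`. -/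
abbrev Wreath (C : Type*) [Group C] (α : ℕ) : Type _ :=
  SemidirectProduct (Fin α → C) (Equiv.Perm (Fin α)) (wreathAut C α)

open Equiv SemidirectProduct Subgroup

section Aux
variable {C : Type*} [Group C] {α : ℕ}

lemma wreathAut_apply (σ : Perm (Fin α)) (f : Fin α → C) (i : Fin α) :
    wreathAut C α σ f i = f (σ⁻¹ i) := rfl

lemma wreathAut_mulSingle (σ : Perm (Fin α)) (x : Fin α) (v : C) :
    wreathAut C α σ (Pi.mulSingle x v) = Pi.mulSingle (σ x) v := by
  funext i
  by_cases h : i = σ x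
  · subst h
    rw [wreathAut_apply]
    rw [show σ⁻¹ (σ x) = x from Equiv.symm_apply_apply σ x]
    simp
  · rw [wreathAut_apply, Pi.mulSingle_apply, Pi.mulSingle_apply, if_neg h, if_neg]
    intro hc
    exact h (by simpa [Equiv.Perm.inv_eq_iff_eq, Equiv.symm_apply_eq] using hc)

lemma conj_inr (g : Wreath C α) (ρ : Perm (Fin α)) :
    g * inr ρ * g⁻¹ =
      ⟨g.left * wreathAut C α (g.right * ρ * g.right⁻¹) g.left⁻¹, g.right * ρ * g.right⁻¹⟩ := by
  have h1 : g * inr ρ = ⟨g.left, g.right * ρ⟩ := by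
    refine SemidirectProduct.ext ?_ ?_ <;> simp
  rw [h1]
  refine SemidirectProduct.ext ?_ ?_
  · simp only [mul_left, inv_left, inv_right]
    rw [← MulAut.mul_apply, ← map_mul]
  · simp

lemma conj_inl (σ : Perm (Fin α)) (f : Fin α → C) :
    inr σ * inl f * (inr σ)⁻¹ = (inl (wreathAut C α σ f) : Wreath C α) := by
  refine SemidirectProduct.ext ?_ ?_ <;> simp

end Aux

section Gen

variable (d m : ℕ)

def we0 : Fin (m + 2) → Multiplicative (ZMod d) := Pi.mulSingle 0 (Multiplicative.ofAdd 1)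

def wA : Wreath (Multiplicative (ZMod d)) (m + 2) := ⟨we0 d m, finRotate (m + 2)⟩

def wB : Wreath (Multiplicative (ZMod d)) (m + 2) := inr (Equiv.swap 0 1)

lemma rot_apply (k : ℕ) (h : k + 1 < m + 2) :
    finRotate (m + 2) ⟨k, by omega⟩ = ⟨k + 1, h⟩ := by
  rw [finRotate_succ_apply]
  apply Fin.ext
  rw [Fin.val_add_one_of_lt]
  · simp [Fin.lt_def, Fin.last]; omega

lemma wreath_gen [NeZero d] : Subgroup.closure {wA d m, wB d m} = ⊤ := by
  set H := Subgroup.closure {wA d m, wB d m} with hH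
  have ha : wA d m ∈ H := Subgroup.subset_closure (Set.mem_insert _ _)
  have hb : wB d m ∈ H := Subgroup.subset_closure (Set.mem_insert_of_mem _ rfl)
  set c : Perm (Fin (m + 2)) := finRotate (m + 2) with hc
  -- Step A : conjugation of a transposition by wA
  have stepA : ∀ x y : Fin (m + 2), c x ≠ 0 → c y ≠ 0 →
      inr (Equiv.swap x y) ∈ H → inr (Equiv.swap (c x) (c y)) ∈ H := by
    intro x y hx hy hmem
    have h1 := H.mul_mem (H.mul_mem ha hmem) (H.inv_mem ha)
    rw [conj_inr] at h1
    have h2 : (wA d m).right * Equiv.swap x y * (wA d m).right⁻¹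
        = Equiv.swap (c x) (c y) := (Equiv.swap_apply_apply c x y).symm
    rw [h2] at h1
    have h3 : Equiv.swap (c x) (c y) 0 = 0 :=
      Equiv.swap_apply_of_ne_of_ne (Ne.symm hx) (Ne.symm hy)
    have h4 : (wA d m).left *
        wreathAut (Multiplicative (ZMod d)) (m + 2) (Equiv.swap (c x) (c y)) (wA d m).left⁻¹
        = 1 := by
      show we0 d m * _ = 1
      rw [show (wA d m).left⁻¹ = (we0 d m)⁻¹ from rfl, map_inv]
      rw [show we0 d m = Pi.mulSingle (0 : Fin (m+2)) (Multiplicative.ofAdd (1 : ZMod d)) from rfl]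
      rw [wreathAut_mulSingle, h3]
      exact mul_inv_cancel _
    rw [h4] at h1
    exact h1
  -- adjacent transpositions
  have adj : ∀ k, (hk : k + 1 < m + 2) →
      inr (Equiv.swap (⟨k, by omega⟩ : Fin (m + 2)) ⟨k + 1, hk⟩) ∈ H := by
    intro k
    induction k with
    | zero =>
      intro hk
      have h0 : (⟨0, by omega⟩ : Fin (m + 2)) = 0 := rfl
      have h1 : (⟨1, hk⟩ : Fin (m + 2)) = 1 := by
        apply Fin.ext; simp [Fin.val_one]
      rw [h0, h1]; exact hb
    | succ k ih =>
      intro hk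
      have hk' : k + 1 < m + 2 := by omega
      have hx : c ⟨k, by omega⟩ = ⟨k + 1, hk'⟩ := rot_apply m k hk'
      have hy : c ⟨k + 1, hk'⟩ = ⟨k + 2, hk⟩ := rot_apply m (k + 1) hk
      have := stepA _ _ (by rw [hx]; simp [Fin.ext_iff]) (by rw [hy]; simp [Fin.ext_iff])
        (ih hk')
      rw [hx, hy] at this
      exact this
  -- swaps with 0
  have swap0 : ∀ k, (hk : k < m + 2) → inr (Equiv.swap 0 (⟨k, hk⟩ : Fin (m + 2))) ∈ H := by
    intro k
    induction k with
    | zero =>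
      intro hk
      have h0 : (⟨0, hk⟩ : Fin (m + 2)) = 0 := rfl
      rw [h0, Equiv.swap_self, ← Equiv.Perm.one_def, map_one]
      exact H.one_mem
    | succ k ih =>
      intro hk
      rcases Nat.eq_zero_or_pos k with rfl | hkpos
      · have h1 : (⟨0 + 1, hk⟩ : Fin (m + 2)) = ⟨1, hk⟩ := rfl
        have := adj 0 hk
        have h0 : (⟨0, by omega⟩ : Fin (m + 2)) = 0 := rfl
        rw [h0] at this
        exact this
      · have hk' : k < m + 2 := by omega
        set σ := Equiv.swap (⟨k, hk'⟩ : Fin (m + 2)) ⟨k + 1, hk⟩ with hσ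
        have hσH : inr σ ∈ H := adj k hk
        have hσ0 : σ 0 = 0 := by
          apply Equiv.swap_apply_of_ne_of_ne <;> simp [Fin.ext_iff] <;> omega
        have hσk : σ ⟨k, hk'⟩ = ⟨k + 1, hk⟩ := Equiv.swap_apply_left _ _
        have key : Equiv.swap (0 : Fin (m + 2)) ⟨k + 1, hk⟩ = σ * Equiv.swap 0 ⟨k, hk'⟩ * σ⁻¹ := by
          conv_lhs => rw [← hσ0, ← hσk]
          exact Equiv.swap_apply_apply σ _ _
        rw [key, map_mul, map_mul, map_inv]
        exact H.mul_mem (H.mul_mem hσH (ih hk')) (H.inv_mem hσH)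
  have swap0' : ∀ x : Fin (m + 2), inr (Equiv.swap 0 x) ∈ H := by
    intro x
    have := swap0 x.val x.isLt
    simpa using this
  -- all transpositions
  have swaps : ∀ x y : Fin (m + 2), inr (Equiv.swap x y) ∈ H := by
    intro x y
    by_cases hxy : x = y
    · subst hxy
      rw [Equiv.swap_self, ← Equiv.Perm.one_def, map_one]
      exact H.one_mem
    by_cases hx : x = 0
    · subst hx; exact swap0' y
    by_cases hy : y = 0
    · subst hy; rw [Equiv.swap_comm]; exact swap0' x
    · have key : Equiv.swap x y
          = Equiv.swap 0 x * Equiv.swap 0 y * (Equiv.swap 0 x)⁻¹ := by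
        have h1 : Equiv.swap (0 : Fin (m+2)) x 0 = x := Equiv.swap_apply_left _ _
        have h2 : Equiv.swap (0 : Fin (m+2)) x y = y :=
          Equiv.swap_apply_of_ne_of_ne hy (Ne.symm hxy)
        conv_lhs => rw [← h1, ← h2]
        exact Equiv.swap_apply_apply _ _ _
      rw [key, map_mul, map_mul, map_inv]
      exact H.mul_mem (H.mul_mem (swap0' x) (swap0' y)) (H.inv_mem (swap0' x))
  -- all permutations
  have perms : ∀ σ : Perm (Fin (m + 2)), inr σ ∈ H := by
    intro σ
    have h1 : σ ∈ Subgroup.closure {σ : Perm (Fin (m + 2)) | σ.IsSwap} := by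
      rw [Equiv.Perm.closure_isSwap]; trivial
    have h2 : Subgroup.closure {σ : Perm (Fin (m + 2)) | σ.IsSwap}
        ≤ H.comap (inr : Perm (Fin (m+2)) →* _) := by
      rw [Subgroup.closure_le]
      rintro τ ⟨x, y, -, rfl⟩
      exact swaps x y
    exact h2 h1
  -- the base single element
  have base0 : inl (we0 d m) ∈ H := by
    have key : wA d m * (inr c)⁻¹ = inl (we0 d m) := by
      refine SemidirectProduct.ext ?_ ?_ <;> simp [wA, hc]
    rw [← key]
    exact H.mul_mem ha (H.inv_mem (perms c))
  -- all mulSingles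
  have singles : ∀ (x : Fin (m + 2)) (v : Multiplicative (ZMod d)),
      inl (Pi.mulSingle x v) ∈ H := by
    intro x v
    have h1 : inl (Pi.mulSingle x (Multiplicative.ofAdd (1 : ZMod d))) ∈ H := by
      have := H.mul_mem (H.mul_mem (perms (Equiv.swap 0 x)) base0)
        (H.inv_mem (perms (Equiv.swap 0 x)))
      rw [conj_inl] at this
      rw [show we0 d m = Pi.mulSingle (0 : Fin (m+2)) (Multiplicative.ofAdd (1 : ZMod d)) from rfl,
        wreathAut_mulSingle, Equiv.swap_apply_left] at this
      exact this
    have hv : v = (Multiplicative.ofAdd (1 : ZMod d)) ^ (v.toAdd.val) := by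
      rw [← ofAdd_nsmul, nsmul_eq_mul, mul_one, ZMod.natCast_rightInverse v.toAdd]
      exact (ofAdd_toAdd v).symm
    rw [hv, Pi.mulSingle_pow, map_pow]
    exact H.pow_mem h1 _
  -- full base group
  have allbase : ∀ f : Fin (m + 2) → Multiplicative (ZMod d), inl f ∈ H := by
    intro f
    have hf : f ∈ H.comap (inl : (Fin (m+2) → Multiplicative (ZMod d)) →* _) := by
      rw [← Finset.univ_prod_mulSingle f]
      exact Subgroup.prod_mem _ fun i _ => Subgroup.mem_comap.2 (singles i (f i))
    exact Subgroup.mem_comap.1 hf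
  rw [eq_top_iff]
  intro g _
  rw [← inl_left_mul_inr_right g]
  exact H.mul_mem (allbase g.left) (perms g.right)

end Gen


/-- The rank of a group: minimal cardinality of a generating set. -/
noncomputable def grank (G : Type*) [Group G] : Cardinal :=
  sInf {c : Cardinal | ∃ T : Set G, Cardinal.mk T = c ∧ Subgroup.closure T = ⊤}

/-- For d, α ≥ 2 the wreath product ℤ/dℤ ≀ S_α has rank exactly 2. -/
theorem rank_zmod_wreath_symm (d α : ℕ) (hd : 2 ≤ d) (hα : 2 ≤ α) :
    grank (Wreath (Multiplicative (ZMod d)) α) = 2 := by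
  obtain ⟨m, rfl⟩ : ∃ m, α = m + 2 := ⟨α - 2, by omega⟩
  haveI : NeZero d := ⟨by omega⟩
  haveI : Fact (1 < d) := ⟨hd⟩
  set W := Wreath (Multiplicative (ZMod d)) (m + 2) with hW
  have hne : we0 d m ≠ 1 := by
    intro h
    have h0 := congrFun h 0
    rw [show we0 d m = Pi.mulSingle (0 : Fin (m+2)) (Multiplicative.ofAdd (1 : ZMod d)) from rfl,
      Pi.mulSingle_eq_same] at h0
    exact one_ne_zero ((Multiplicative.ofAdd.injective h0 : (1 : ZMod d) = 0))
  have hab : wA d m ≠ wB d m := by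
    intro h
    exact hne (congrArg SemidirectProduct.left h)
  have h2mem : (2 : Cardinal) ∈
      {c : Cardinal | ∃ T : Set W, Cardinal.mk T = c ∧ Subgroup.closure T = ⊤} := by
    refine ⟨{wA d m, wB d m}, ?_, wreath_gen d m⟩
    rw [Cardinal.mk_insert (by simpa using hab), Cardinal.mk_singleton, one_add_one_eq_two]
  apply le_antisymm
  · exact csInf_le (OrderBot.bddBelow _) h2mem
  · refine le_csInf ⟨2, h2mem⟩ ?_
    rintro cc ⟨T, rfl, hTtop⟩
    by_contra hlt
    push_neg at hlt
    have hsub : T.Subsingleton := by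
      rw [← Set.subsingleton_coe]
      by_contra hns
      rcases not_subsingleton_iff_nontrivial.mp hns with ⟨x, y, hxy⟩
      exact absurd hlt (not_lt.2 (Cardinal.two_le_iff.mpr ⟨x, y, hxy⟩))
    -- commutative
    have hcomm : ∀ u v : W, u * v = v * u := by
      rcases hsub.eq_empty_or_singleton with rfl | ⟨x, rfl⟩
      · rw [Subgroup.closure_empty] at hTtop
        intro u v
        have hu : u = 1 := by
          have : u ∈ (⊥ : Subgroup W) := hTtop ▸ Subgroup.mem_top u
          simpa [Subgroup.mem_bot] using this
        simp [hu]
      · intro u v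
        have hu : u ∈ Subgroup.closure ({x} : Set W) := hTtop ▸ Subgroup.mem_top u
        have hv : v ∈ Subgroup.closure ({x} : Set W) := hTtop ▸ Subgroup.mem_top v
        obtain ⟨i, rfl⟩ := Subgroup.mem_closure_singleton.1 hu
        obtain ⟨j, rfl⟩ := Subgroup.mem_closure_singleton.1 hv
        exact zpow_mul_comm x i j
    -- contradiction with a specific pair
    have hkey := hcomm (inl (we0 d m)) (inr (Equiv.swap 0 1))
    have hconj : inr (Equiv.swap (0 : Fin (m+2)) 1) * inl (we0 d m)
        * (inr (Equiv.swap (0 : Fin (m+2)) 1))⁻¹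
        = (inl (we0 d m) : Wreath (Multiplicative (ZMod d)) (m + 2)) := by
      rw [← hkey, mul_inv_cancel_right]
    rw [conj_inl] at hconj
    have heq := inl_injective hconj
    rw [show we0 d m = Pi.mulSingle (0 : Fin (m+2)) (Multiplicative.ofAdd (1 : ZMod d)) from rfl,
      wreathAut_mulSingle, Equiv.swap_apply_left] at heq
    have h0 := congrFun heq 0
    rw [Pi.mulSingle_eq_same, Pi.mulSingle_eq_of_ne
      (by simp [Fin.ext_iff] : (0 : Fin (m+2)) ≠ 1)] at h0
    exact one_ne_zero ((Multiplicative.ofAdd.injective h0.symm : (1 : ZMod d) = 0))
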